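/- Let b > 0, V_G > 0, Q_L ≤ 0, p ∈ ℝ with Δ = -4Q_L/(bV_G²), Γ = p/(bV_G²) satisfying Δ + 4Γ² < 1. Define v± = √((1/2)(1 - Δ/2 ± √(1 - (4Γ² + Δ)))). Then the two-bus power flow equations p = bV_GV_L sin(η), Q_L = bV_L² - bV_LV_G cos(η) have no solution (η, V_L) ∈ [-π/2, π/2] × ℝ_{>0} with v₋ < V_L/V_G < v₊, and no solution with V_L/V_G > 1. -/

import Mathlib

set_option maxHeartbeats 1000000


open Real

/-- No medium-voltage and no extra-high-voltage solutions of the two-bus power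
flow equations: no solution has `v₋ < V_L/V_G < v₊`, and none has `V_L/V_G > 1`. -/
theorem stmt_10 (b VG QL p : ℝ) (hb : 0 < b) (hVG : 0 < VG) (hQL : QL ≤ 0)
    (Γ Δ : ℝ) (hΓdef : Γ = p / (b * VG ^ 2)) (hΔdef : Δ = -4 * QL / (b * VG ^ 2))
    (h : Δ + 4 * Γ ^ 2 < 1) :
    let vp := Real.sqrt ((1 / 2) * (1 - Δ / 2 + Real.sqrt (1 - (4 * Γ ^ 2 + Δ))))
    let vm := Real.sqrt ((1 / 2) * (1 - Δ / 2 - Real.sqrt (1 - (4 * Γ ^ 2 + Δ))))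
    ∀ η VL : ℝ, η ∈ Set.Icc (-(π / 2)) (π / 2) → 0 < VL →
      p = b * VG * VL * Real.sin η →
      QL = b * VL ^ 2 - b * VL * VG * Real.cos η →
      ¬(vm < VL / VG ∧ VL / VG < vp) ∧ ¬(VL / VG > 1) := by
  intro vp vm η VL hη hVL hp hQ
  have hbVG2 : 0 < b * VG ^ 2 := by positivity
  have hΔ0 : 0 ≤ Δ := by
    rw [hΔdef]; apply div_nonneg _ hbVG2.le; linarith
  set s := Real.sqrt (1 - (4 * Γ ^ 2 + Δ)) with hsdef
  have hs0 : 0 ≤ s := Real.sqrt_nonneg _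
  have hs2 : s ^ 2 = 1 - (4 * Γ ^ 2 + Δ) := Real.sq_sqrt (by linarith)
  have hs1 : s ≤ 1 := by
    rw [hsdef]
    calc Real.sqrt (1 - (4 * Γ ^ 2 + Δ)) ≤ Real.sqrt 1 := by
          apply Real.sqrt_le_sqrt; nlinarith [sq_nonneg Γ]
      _ = 1 := Real.sqrt_one
  set u := VL / VG with hu
  have hu0 : 0 < u := div_pos hVL hVG
  set A := (1 / 2) * (1 - Δ / 2 + s) with hA
  set B := (1 / 2) * (1 - Δ / 2 - s) with hB
  have h1Δ : 0 ≤ 1 - Δ / 2 := by nlinarith [sq_nonneg Γ]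
  have hsle : s ≤ 1 - Δ / 2 := by nlinarith [sq_nonneg Γ, hs2, hs0, h1Δ, sq_nonneg (1 - Δ / 2 - s)]
  have hA0 : 0 ≤ A := by rw [hA]; linarith
  have hB0 : 0 ≤ B := by rw [hB]; linarith
  -- Pythagorean combination
  have hpyth : p ^ 2 + (b * VL ^ 2 - QL) ^ 2 = (b * VG * VL) ^ 2 := by
    have hsc := sin_sq_add_cos_sq η
    have hc : b * VL ^ 2 - QL = b * VL * VG * Real.cos η := by rw [hQ]; ring
    rw [hp, hc]
    nlinarith [hsc]
  have hpΓ : p = Γ * (b * VG ^ 2) := by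
    rw [hΓdef]; field_simp
  have hQΔ : QL = -Δ * (b * VG ^ 2) / 4 := by
    rw [hΔdef]; field_simp
  have hVLu : VL = u * VG := by rw [hu]; field_simp
  have key : (u ^ 2 - A) * (u ^ 2 - B) = 0 := by
    have hexp : Γ ^ 2 + (u ^ 2 + Δ / 4) ^ 2 = u ^ 2 := by
      have := hpyth
      rw [hpΓ, hQΔ, hVLu] at this
      have hb2 : (b * VG ^ 2) ^ 2 ≠ 0 := by positivity
      field_simp at this
      have h16 : (16 : ℝ) * (b * VG ^ 2) ^ 2 ≠ 0 := by positivity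
      apply mul_left_cancel₀ h16
      linear_combination (b * VG ^ 2) ^ 2 * this
    nlinarith [hexp, hs2]
  have hcases : u ^ 2 = A ∨ u ^ 2 = B := by
    rcases mul_eq_zero.mp key with h1 | h1
    · left; linarith
    · right; linarith
  have huval : u = vp ∨ u = vm := by
    rcases hcases with h1 | h1
    · left
      have : u = Real.sqrt (u ^ 2) := (Real.sqrt_sq hu0.le).symm
      rw [this, h1]
    · right
      have : u = Real.sqrt (u ^ 2) := (Real.sqrt_sq hu0.le).symm
      rw [this, h1]
  have hvple1 : vp ≤ 1 := by
    show Real.sqrt A ≤ 1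
    rw [show (1:ℝ) = Real.sqrt 1 from Real.sqrt_one.symm]
    apply Real.sqrt_le_sqrt
    nlinarith
  constructor
  · rintro ⟨h1, h2⟩
    rcases huval with he | he
    · exact absurd h2 (by rw [he]; exact lt_irrefl _)
    · exact absurd h1 (by rw [he]; exact lt_irrefl _)
  · intro hgt
    have hule : u ≤ vp := by
      rcases huval with he | he
      · exact he.le
      · rw [he]
        exact Real.sqrt_le_sqrt (by nlinarith)
    exact absurd hgt (by simp only [gt_iff_lt, not_lt]; linarith)
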